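/- For all natural numbers k: Σ_{j=0}^{k} C(2k,2j) · (-7)^j · (2j-1)!! · (2k-2j-1)!! = (-1)^k · (2k)! · 3^k / k!. -/

import Mathlib

open Finset

lemma fact_two_mul_eq (j : ℕ) :
    ((2 * j).factorial : ℚ) = 2 ^ j * j.factorial * (Nat.doubleFactorial (2 * j - 1) : ℚ) := by
  cases j with
  | zero => norm_num [Nat.doubleFactorial]
  | succ n =>
    have h : (2 * (n + 1)).factorial = 2 ^ (n + 1) * (n + 1).factorial *
        Nat.doubleFactorial (2 * (n + 1) - 1) := by
      have h1 : 2 * (n + 1) = (2 * n + 1) + 1 := by ring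
      have h2 : 2 * (n + 1) - 1 = 2 * n + 1 := by omega
      rw [h2, h1, Nat.factorial_eq_mul_doubleFactorial]
      have h3 : (2 * n + 1 + 1) = 2 * (n + 1) := by ring
      rw [h3, Nat.doubleFactorial_two_mul]
    exact_mod_cast congrArg (Nat.cast : ℕ → ℚ) h

lemma df_cast (j : ℕ) : (Nat.doubleFactorial (2 * j - 1) : ℚ) =
    ((2 * j).factorial : ℚ) / (2 ^ j * j.factorial) := by
  have := fact_two_mul_eq j
  have hne : (2 : ℚ) ^ j * j.factorial ≠ 0 := by positivity
  field_simp [this]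
  rw [this]
  ring

theorem stmt_7 (k : ℕ) :
    ∑ j ∈ range (k + 1),
        ((2 * k).choose (2 * j) : ℚ) * (-7) ^ j * (Nat.doubleFactorial (2 * j - 1) : ℚ) *
          (Nat.doubleFactorial (2 * k - 2 * j - 1) : ℚ) =
      (-1) ^ k * ((2 * k).factorial : ℚ) * 3 ^ k / (k.factorial : ℚ) := by
  have key : ∀ j ∈ range (k + 1),
      ((2 * k).choose (2 * j) : ℚ) * (-7) ^ j * (Nat.doubleFactorial (2 * j - 1) : ℚ) *
        (Nat.doubleFactorial (2 * k - 2 * j - 1) : ℚ) =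
      ((2 * k).factorial : ℚ) / (2 ^ k * k.factorial) *
        ((-7) ^ j * 1 ^ (k - j) * (k.choose j : ℚ)) := by
    intro j hj
    rw [mem_range] at hj
    have hjk : j ≤ k := by omega
    obtain ⟨m, rfl⟩ := Nat.exists_eq_add_of_le hjk
    have h1 : 2 * j ≤ 2 * (j + m) := by omega
    have h2 : 2 * (j + m) - 2 * j = 2 * m := by omega
    rw [Nat.cast_choose ℚ h1, h2, df_cast j, df_cast m,
      Nat.cast_choose ℚ (Nat.le_add_right j m)]
    have h3 : j + m - j = m := by omega
    rw [h3]
    have f1 : ((2 * j).factorial : ℚ) ≠ 0 := by positivity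
    have f2 : ((2 * m).factorial : ℚ) ≠ 0 := by positivity
    have f3 : (j.factorial : ℚ) ≠ 0 := by positivity
    have f4 : (m.factorial : ℚ) ≠ 0 := by positivity
    field_simp [pow_add]
    ring
  rw [sum_congr rfl key, ← mul_sum, ← add_pow (-7 : ℚ) 1 k]
  have hk : (k.factorial : ℚ) ≠ 0 := by positivity
  have : ((-7 : ℚ) + 1) ^ k = (-1) ^ k * 2 ^ k * 3 ^ k := by
    rw [show (-7 : ℚ) + 1 = (-1) * 2 * 3 by norm_num, mul_pow, mul_pow]
  rw [this]
  field_simp
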